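/- If ∑_{i=1}^p |z_i| < ‖w‖, then the map φ(λ) = (1/‖w‖) ∑_i max(‖w‖ − (λ+1)z_i, 0) is a contraction on [0,∞) with Lipschitz constant (∑_i |z_i|)/‖w‖ < 1; consequently the Picard iteration λ_{k+1} = φ(λ_k), starting from any λ₀ > 0, converges to the unique solution of λ‖w‖ = ∑_i max(‖w‖ − (λ+1)z_i, 0). -/

import Mathlib

theorem picard_iteration_converges
    (p q : ℕ) (hp : 0 < p) (hq : 0 < q)
    (z : Fin p → ℝ) (w : EuclideanSpace ℝ (Fin q)) (hw : w ≠ 0)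
    (hz : ∑ i : Fin p, |z i| < ‖w‖)
    (φ : ℝ → ℝ)
    (hφ : φ = fun lam : ℝ => (1 / ‖w‖) * ∑ i : Fin p, max (‖w‖ - (lam + 1) * z i) 0) :
    (∀ lam ∈ Set.Ici (0 : ℝ), ∀ mu ∈ Set.Ici (0 : ℝ),
        |φ lam - φ mu| ≤ ((∑ i : Fin p, |z i|) / ‖w‖) * |lam - mu|) ∧
      (∑ i : Fin p, |z i|) / ‖w‖ < 1 ∧
      ∃! lamStar : ℝ,
        (lamStar * ‖w‖ = ∑ i : Fin p, max (‖w‖ - (lamStar + 1) * z i) 0 ∧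
          ∀ lam₀ : ℝ, 0 < lam₀ →
            Filter.Tendsto (fun k : ℕ => φ^[k] lam₀) Filter.atTop (nhds lamStar)) := by
  have hw' : (0 : ℝ) < ‖w‖ := norm_pos_iff.mpr hw
  set S : ℝ := ∑ i : Fin p, |z i| with hS
  have hS0 : 0 ≤ S := Finset.sum_nonneg fun i _ => abs_nonneg _
  have hK0 : 0 ≤ S / ‖w‖ := div_nonneg hS0 hw'.le
  have hK1 : S / ‖w‖ < 1 := (div_lt_one hw').mpr hz
  -- global Lipschitz bound
  have hlip : ∀ lam mu : ℝ, |φ lam - φ mu| ≤ (S / ‖w‖) * |lam - mu| := by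
    intro lam mu
    subst hφ
    simp only
    rw [← mul_sub, ← Finset.sum_sub_distrib, abs_mul, abs_of_pos (by positivity : (0:ℝ) < 1/‖w‖)]
    have hbound : |∑ i : Fin p, (max (‖w‖ - (lam + 1) * z i) 0 - max (‖w‖ - (mu + 1) * z i) 0)|
        ≤ ∑ i : Fin p, |z i| * |lam - mu| := by
      refine (Finset.abs_sum_le_sum_abs _ _).trans (Finset.sum_le_sum fun i _ => ?_)
      have h1 : |max (‖w‖ - (lam + 1) * z i) 0 - max (‖w‖ - (mu + 1) * z i) 0|
          ≤ |(‖w‖ - (lam + 1) * z i) - (‖w‖ - (mu + 1) * z i)| := abs_max_sub_max_le_abs _ _ _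
      calc |max (‖w‖ - (lam + 1) * z i) 0 - max (‖w‖ - (mu + 1) * z i) 0|
          ≤ |(‖w‖ - (lam + 1) * z i) - (‖w‖ - (mu + 1) * z i)| := h1
        _ = |z i * (mu - lam)| := by ring_nf
        _ = |z i| * |lam - mu| := by rw [abs_mul, abs_sub_comm]
    calc 1 / ‖w‖ * |∑ i : Fin p, (max (‖w‖ - (lam + 1) * z i) 0 - max (‖w‖ - (mu + 1) * z i) 0)|
        ≤ 1 / ‖w‖ * (∑ i : Fin p, |z i| * |lam - mu|) := by
          apply mul_le_mul_of_nonneg_left hbound (by positivity)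
      _ = S / ‖w‖ * |lam - mu| := by rw [← Finset.sum_mul]; ring
  refine ⟨fun lam _ mu _ => hlip lam mu, hK1, ?_⟩
  -- contraction
  set K : NNReal := ⟨S / ‖w‖, hK0⟩ with hKdef
  have hc : ContractingWith K φ := by
    constructor
    · exact_mod_cast hK1
    · rw [lipschitzWith_iff_dist_le_mul]
      intro x y
      rw [Real.dist_eq, Real.dist_eq]; exact hlip x y
  -- fixed point equation ↔ the stated equation
  have heq : ∀ y : ℝ, (y * ‖w‖ = ∑ i : Fin p, max (‖w‖ - (y + 1) * z i) 0) ↔ φ y = y := by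
    intro y
    rw [hφ]
    simp only
    rw [div_mul_eq_mul_div, one_mul, div_eq_iff hw'.ne']
    exact eq_comm
  refine ⟨hc.fixedPoint φ, ⟨?_, ?_⟩, ?_⟩
  · exact (heq _).mpr hc.fixedPoint_isFixedPt
  · intro lam₀ _
    exact hc.tendsto_iterate_fixedPoint lam₀
  · rintro y ⟨hy, -⟩
    exact hc.fixedPoint_unique ((heq y).mp hy)
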